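/- arXiv:1902.08057 — 3 statements merged into one kernel-verified Lean document; each statement's English description precedes it below -/
import Mathlib

section
/- Let A be an n×n complex matrix, V an n×k matrix with orthonormal columns (V*V = I), θ a complex scalar, and y a unit vector in C^k. Suppose w := (I - yy*)z minimizes ‖(A - θI)Vy + (A - θI)V(I - yy*)z‖ over all z ∈ C^k. Then with m := y + w, one has ‖(A - θI)Vm‖² = ‖(A - θI)Vy‖² - ‖(A - θI)Vw‖². -/
open Matrix
open scoped ComplexConjugate

/-- Squared Euclidean norm of a complex vector. -/
noncomputable def nsq {k : ℕ} (x : Fin k → ℂ) : ℝ := ∑ i, ‖x i‖ ^ 2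

/-- Standard Hermitian inner product (conjugate-linear in the first argument). -/
noncomputable def cip {k : ℕ} (x y : Fin k → ℂ) : ℂ := ∑ i, conj (x i) * y i

/-- Orthogonal projection `(I - yy*) v`. -/
noncomputable def proj {k : ℕ} (y v : Fin k → ℂ) : Fin k → ℂ := v - cip y v • y

namespace StmtAux

variable {k : ℕ}

noncomputable def E (x : Fin k → ℂ) : EuclideanSpace ℂ (Fin k) := WithLp.toLp 2 x

lemma nsq_eq (x : Fin k → ℂ) : nsq x = ‖E x‖ ^ 2 := by
  rw [EuclideanSpace.norm_eq, Real.sq_sqrt (by positivity)]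
  rfl

lemma cip_eq (x y : Fin k → ℂ) : cip x y = inner (𝕜 := ℂ) (E x) (E y) := by
  rw [PiLp.inner_apply]
  simp [cip, E, RCLike.inner_apply, mul_comm]

lemma cip_add_right (x a b : Fin k → ℂ) : cip x (a + b) = cip x a + cip x b := by
  simp [cip, mul_add, Finset.sum_add_distrib]

lemma cip_sub_right (x a b : Fin k → ℂ) : cip x (a - b) = cip x a - cip x b := by
  simp [cip, mul_sub, Finset.sum_sub_distrib]

lemma cip_smul_right (x a : Fin k → ℂ) (c : ℂ) : cip x (c • a) = c * cip x a := by
  simp only [cip, Pi.smul_apply, smul_eq_mul, Finset.mul_sum]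
  exact Finset.sum_congr rfl fun i _ => by ring

lemma cip_self (x : Fin k → ℂ) : cip x x = (nsq x : ℝ) := by
  simp [cip, nsq, Complex.conj_mul']

end StmtAux

open StmtAux in
theorem stmt0 {n k : ℕ} (A : Matrix (Fin n) (Fin n) ℂ) (V : Matrix (Fin n) (Fin k) ℂ)
    (θ : ℂ) (y z : Fin k → ℂ)
    (hV : Vᴴ * V = 1) (hy : nsq y = 1)
    (w : Fin k → ℂ) (hw : w = proj y z)
    (hmin : ∀ z' : Fin k → ℂ,
      nsq ((A - θ • 1).mulVec (V.mulVec (y + w)))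
        ≤ nsq ((A - θ • 1).mulVec (V.mulVec (y + proj y z')))) :
    nsq ((A - θ • 1).mulVec (V.mulVec (y + w)))
      = nsq ((A - θ • 1).mulVec (V.mulVec y))
        - nsq ((A - θ • 1).mulVec (V.mulVec w)) := by
  set B := A - θ • (1 : Matrix (Fin n) (Fin n) ℂ) with hB
  have hyy : cip y y = 1 := by rw [cip_self, hy, Complex.ofReal_one]
  have hcyw : cip y w = 0 := by
    rw [hw, proj, cip_sub_right, cip_smul_right, hyy, mul_one, sub_self]
  have hproj_lin : ∀ c : ℂ, proj y (z + c • w) = w + c • w := by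
    intro c
    have h1 : cip y (z + c • w) = cip y z := by
      rw [cip_add_right, cip_smul_right, hcyw, mul_zero, add_zero]
    rw [proj, h1, hw, proj]
    module
  set u := B.mulVec (V.mulVec (y + w)) with hu
  set v := B.mulVec (V.mulVec w) with hv
  have hvec : ∀ c : ℂ, B.mulVec (V.mulVec (y + proj y (z + c • w))) = u + c • v := by
    intro c
    rw [hproj_lin]
    have : y + (w + c • w) = (y + w) + c • w := by module
    rw [this, Matrix.mulVec_add, Matrix.mulVec_add, Matrix.mulVec_smul, Matrix.mulVec_smul]
  have hm : ∀ c : ℂ, nsq u ≤ nsq (u + c • v) := by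
    intro c
    have := hmin (z + c • w)
    rwa [hvec c] at this
  -- move to EuclideanSpace
  have hm' : ∀ c : ℂ, ‖E u‖ ^ 2 ≤ ‖E u + c • E v‖ ^ 2 := by
    intro c
    have := hm c
    rw [nsq_eq, nsq_eq] at this
    simpa [E] using this
  set s : ℂ := inner (𝕜 := ℂ) (E u) (E v) with hs
  have horth : s = 0 := by
    by_contra hne
    set t : ℝ := 1 / (‖E v‖ ^ 2 + 1) with ht
    have htpos : 0 < t := by positivity
    have := hm' (-(t : ℂ) * conj s)
    rw [norm_add_sq (𝕜 := ℂ), inner_smul_right, norm_smul] at this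
    rw [← hs] at this
    have hres : RCLike.re (-(t : ℂ) * conj s * s) = -t * ‖s‖ ^ 2 := by
      have h2 : -(t : ℂ) * conj s * s = ((-t * ‖s‖ ^ 2 : ℝ) : ℂ) := by
        rw [mul_assoc, Complex.conj_mul']
        push_cast
        ring
      rw [h2]
      exact Complex.ofReal_re _
    rw [hres] at this
    have hnorm : ‖-(t : ℂ) * conj s‖ = t * ‖s‖ := by
      rw [norm_mul, norm_neg, Complex.norm_real, RCLike.norm_conj,
        Real.norm_of_nonneg htpos.le]
    rw [hnorm] at this
    have hslt : 0 < ‖s‖ := norm_pos_iff.mpr hne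
    have htv : t * ‖E v‖ ^ 2 < 1 := by
      rw [ht]
      rw [div_mul_eq_mul_div, div_lt_one (by positivity)]
      linarith
    nlinarith [mul_lt_mul_of_pos_left htv (by positivity : (0:ℝ) < t * ‖s‖ ^ 2),
      mul_pos htpos (pow_pos hslt 2)]
  -- conclude
  have hsplit : E u = E (B.mulVec (V.mulVec y)) + E v := by
    have : y + w = y + w := rfl
    show E (B.mulVec (V.mulVec (y + w))) = _
    rw [Matrix.mulVec_add, Matrix.mulVec_add]
    simp [E, hv]
  have hYnorm : ‖E (B.mulVec (V.mulVec y))‖ ^ 2 = ‖E u‖ ^ 2 + ‖E v‖ ^ 2 := by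
    have hEy : E (B.mulVec (V.mulVec y)) = E u - E v := by rw [hsplit]; abel
    rw [hEy, norm_sub_sq (𝕜 := ℂ), ← hs, horth]
    simp
  rw [nsq_eq, nsq_eq, nsq_eq, hYnorm]
  ring
end

section
/- Let w = (I - yy*)z be a solution of the normal equations (I - yy*)V*(A - θI)*(A - θI)V w = -(I - yy*)V*(A - θI)*(A - θI)Vy, where y is a unit vector. Then the inner product ⟨(A - θI)Vw, (A - θI)Vy⟩ equals -‖(A - θI)Vw‖². -/
open Matrix
open scoped ComplexConjugate

lemma cip_mulVec_left' {n k : ℕ} (P : Matrix (Fin n) (Fin k) ℂ) (x : Fin k → ℂ)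
    (u : Fin n → ℂ) : cip (P.mulVec x) u = cip x (Pᴴ.mulVec u) := by
  simp only [cip, mulVec, dotProduct, conjTranspose_apply, map_sum, _root_.map_mul,
    Finset.sum_mul, Finset.mul_sum]
  rw [Finset.sum_comm]
  apply Finset.sum_congr rfl; intro j _
  apply Finset.sum_congr rfl; intro i _
  simp only [RCLike.star_def]
  ring

lemma cip_self {k : ℕ} (x : Fin k → ℂ) : cip x x = ((nsq x : ℝ) : ℂ) := by
  simp only [cip, nsq]
  push_cast
  apply Finset.sum_congr rfl; intro i _
  rw [Complex.conj_mul']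

lemma conj_cip {k : ℕ} (a b : Fin k → ℂ) : conj (cip a b) = cip b a := by
  simp [cip, map_sum, mul_comm]

lemma cip_sub_right {k : ℕ} (x a b : Fin k → ℂ) : cip x (a - b) = cip x a - cip x b := by
  simp [cip, mul_sub, Finset.sum_sub_distrib]

lemma cip_neg_right {k : ℕ} (x a : Fin k → ℂ) : cip x (-a) = -cip x a := by
  simp [cip, Finset.sum_neg_distrib]

lemma cip_smul_right {k : ℕ} (c : ℂ) (x v : Fin k → ℂ) : cip x (c • v) = c * cip x v := by
  simp only [cip, Pi.smul_apply, smul_eq_mul, Finset.mul_sum]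
  apply Finset.sum_congr rfl; intro i _; ring

lemma cip_sub_left {k : ℕ} (a b x : Fin k → ℂ) : cip (a - b) x = cip a x - cip b x := by
  simp [cip, sub_mul, Finset.sum_sub_distrib]

lemma cip_smul_left {k : ℕ} (c : ℂ) (v x : Fin k → ℂ) : cip (c • v) x = conj c * cip v x := by
  simp only [cip, Pi.smul_apply, smul_eq_mul, _root_.map_mul, Finset.mul_sum]
  apply Finset.sum_congr rfl; intro i _; ring

theorem stmt1 {n k : ℕ} (A : Matrix (Fin n) (Fin n) ℂ) (V : Matrix (Fin n) (Fin k) ℂ)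
    (θ : ℂ) (y z : Fin k → ℂ)
    (hV : Vᴴ * V = 1) (hy : nsq y = 1)
    (M : Matrix (Fin k) (Fin k) ℂ)
    (hM : M = Vᴴ * (A - θ • 1)ᴴ * ((A - θ • 1) * V))
    (w : Fin k → ℂ) (hw : w = proj y z)
    (hne : proj y (M.mulVec w) = -(proj y (M.mulVec y))) :
    cip ((A - θ • 1).mulVec (V.mulVec w)) ((A - θ • 1).mulVec (V.mulVec y))
      = -((nsq ((A - θ • 1).mulVec (V.mulVec w)) : ℝ) : ℂ) := by
  set B := A - θ • 1 with hB
  -- key identity: ⟨BVu, BVv⟩ = ⟨u, M v⟩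
  have key : ∀ u v : Fin k → ℂ,
      cip (B.mulVec (V.mulVec u)) (B.mulVec (V.mulVec v)) = cip u (M.mulVec v) := by
    intro u v
    rw [cip_mulVec_left', cip_mulVec_left', hM]
    simp [mulVec_mulVec, Matrix.mul_assoc]
  have hyy : cip y y = 1 := by rw [cip_self, hy]; norm_num
  have hwy : cip w y = 0 := by
    rw [hw]
    simp only [proj, cip_sub_left, cip_smul_left, conj_cip, hyy, mul_one, sub_self]
  -- from hne: cip w (M w) = - cip w (M y)
  have hsum : cip w (M.mulVec w) = -cip w (M.mulVec y) := by
    have h := congrArg (fun v => cip w v) hne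
    simp only [proj, cip_sub_right, cip_neg_right, cip_smul_right] at h
    rw [hwy] at h
    simpa using h
  have h1 := key w y
  have h2 := key w w
  have h3 : cip (B.mulVec (V.mulVec w)) (B.mulVec (V.mulVec w))
      = ((nsq (B.mulVec (V.mulVec w)) : ℝ) : ℂ) := cip_self _
  linear_combination h1 + hsum + h2 - h3
end

section
/- Let τ > 1 and let α₆ be the positive root of the quadratic equation 4α² - (2τ - 2)α - 2τ² - τ = 0, i.e., α₆ = ((τ - 1) + √(9τ² + 2τ + 1))/4. Let α₃ = 2τα₆/(τ + α₆), the harmonic mean of τ and α₆. Then α₃ = 2τ(τ - 1 + √(9τ² + 2τ + 1))/(5τ - 1 + √(9τ² + 2τ + 1)) and α₃ ≤ τ - 1/14. -/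
theorem stmt15 (τ α₆ α₃ : ℝ) (hτ : 1 < τ)
    (hα₆ : α₆ = ((τ - 1) + Real.sqrt (9 * τ ^ 2 + 2 * τ + 1)) / 4)
    (hα₃ : α₃ = 2 * τ * α₆ / (τ + α₆)) :
    α₃ = 2 * τ * (τ - 1 + Real.sqrt (9 * τ ^ 2 + 2 * τ + 1)) /
        (5 * τ - 1 + Real.sqrt (9 * τ ^ 2 + 2 * τ + 1)) ∧
      α₃ ≤ τ - 1 / 14 := by
  set s := Real.sqrt (9 * τ ^ 2 + 2 * τ + 1) with hsdef
  have hs0 : 0 ≤ s := Real.sqrt_nonneg _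
  have hs2 : s ^ 2 = 9 * τ ^ 2 + 2 * τ + 1 := by
    rw [hsdef]
    rw [Real.sq_sqrt]
    nlinarith
  have hden : 0 < 5 * τ - 1 + s := by nlinarith
  have hden2 : τ + α₆ ≠ 0 := by rw [hα₆]; nlinarith
  have h1 : α₃ = 2 * τ * (τ - 1 + s) / (5 * τ - 1 + s) := by
    rw [hα₃, hα₆, div_eq_div_iff (by nlinarith) hden.ne']
    ring
  refine ⟨h1, ?_⟩
  rw [h1, div_le_iff₀ hden]
  nlinarith [sq_nonneg (s - (3 * τ + 1)), sq_nonneg s, mul_pos hden (mul_pos (by linarith : (0:ℝ) < τ) (by linarith : (0:ℝ) < τ - 1)), sq_nonneg (τ - 1), mul_nonneg hs0 (by nlinarith : (0:ℝ) ≤ (τ-1)^2)]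
end
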